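/- Let M be a set of 4 items and let two agents have the same strict linear order π₁ = π₂ on M. Then no allocation of all 4 items between the two agents is SD-EFX with respect to (π₁, π₂). -/

import Mathlib

/-- An order on items is encoded as a ranking bijection `π : M ≃ Fin m`, where smaller rank
means more preferred.  `sdDom π A B` says `A` sd-dominates `B` with respect to `π`. -/
def sdDom {M : Type*} [DecidableEq M] {m : ℕ} (π : M ≃ Fin m) (A B : Finset M) : Prop :=
  B.card ≤ A.card ∧ ∀ k < B.card,
    (Finset.sort (A.image fun a => ((π a : Fin m) : ℕ)) (· ≤ ·)).getD k 0 ≤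
    (Finset.sort (B.image fun b => ((π b : Fin m) : ℕ)) (· ≤ ·)).getD k 0

/-- `A` is an allocation of the set `S` of items among `n` agents. -/
def IsAllocation {M : Type*} [DecidableEq M] {n : ℕ} (A : Fin n → Finset M) (S : Finset M) :
    Prop :=
  (∀ i j : Fin n, i ≠ j → Disjoint (A i) (A j)) ∧ Finset.univ.biUnion A = S

/-- The allocation `A` is SD-envy-free up to any item with respect to the orders `π`. -/
def SDEFX {M : Type*} [DecidableEq M] {n m : ℕ} (π : Fin n → (M ≃ Fin m))
    (A : Fin n → Finset M) : Prop :=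
  ∀ i j : Fin n, (A j).Nonempty → ∀ g ∈ A j, sdDom (π i) (A i) ((A j).erase g)

lemma core {M : Type*} [DecidableEq M] (π : M ≃ Fin 4) (Ai Aj : Finset M)
    (hdisj : Disjoint Ai Aj) (hsum : Ai.card + Aj.card = 4) (ht : π.symm 0 ∈ Aj)
    (hd : ∀ g ∈ Aj, sdDom π Ai (Aj.erase g))
    (hd' : ∀ g ∈ Ai, sdDom π Aj (Ai.erase g)) : False := by
  set t := π.symm 0 with htdef
  have hcj : 1 ≤ Aj.card := Finset.card_pos.mpr ⟨t, ht⟩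
  rcases lt_trichotomy Aj.card 2 with h2 | h2 | h2
  · -- Aj.card = 1, Ai.card = 3
    have hAi : Ai.Nonempty := Finset.card_pos.mp (by omega)
    obtain ⟨g, hg⟩ := hAi
    have := (hd' g hg).1
    rw [Finset.card_erase_of_mem hg] at this
    omega
  · -- the interesting case: both bundles have 2 items
    have hci : Ai.card = 2 := by omega
    obtain ⟨g, hg, hgt⟩ := Finset.exists_mem_ne (show 1 < Aj.card by omega) t
    have herase : Aj.erase g = {t} := by
      have hcard : (Aj.erase g).card = 1 := by
        rw [Finset.card_erase_of_mem hg]; omega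
      obtain ⟨a, ha⟩ := Finset.card_eq_one.mp hcard
      have : t ∈ Aj.erase g := Finset.mem_erase.mpr ⟨fun h => hgt h.symm, ht⟩
      rw [ha] at this ⊢
      rw [Finset.mem_singleton.mp this]
    have hsd := hd g hg
    rw [herase] at hsd
    have hk := hsd.2 0 (by simp)
    have hRHS : (Finset.sort (({t} : Finset M).image
        fun b => ((π b : Fin 4) : ℕ)) (· ≤ ·)) = [0] := by
      rw [Finset.image_singleton, htdef, Equiv.apply_symm_apply]
      simp
    rw [hRHS] at hk
    simp only [List.getD, List.getElem?_cons_zero] at hk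
    -- so the best item of Ai has rank ≤ 0, i.e. rank 0, i.e. it is t
    set L := Finset.sort (Ai.image fun a => ((π a : Fin 4) : ℕ)) (· ≤ ·) with hL
    have hinj : Function.Injective fun a : M => ((π a : Fin 4) : ℕ) :=
      fun a b hab => π.injective (Fin.val_injective hab)
    have hlen : L.length = 2 := by
      rw [hL, Finset.length_sort, Finset.card_image_of_injective _ hinj, hci]
    have hlt : 0 < L.length := by omega
    have hmem : L.getD 0 0 ∈ L := by
      rw [List.getD_eq_getElem L 0 hlt]
      exact List.getElem_mem hlt
    have hmem' : L.getD 0 0 ∈ Ai.image fun a => ((π a : Fin 4) : ℕ) :=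
      (Finset.mem_sort (r := (· ≤ ·))).mp hmem
    obtain ⟨a, ha, hpa⟩ := Finset.mem_image.mp hmem'
    have hk0 : L.getD 0 0 ≤ 0 := hk
    have hpa0 : π a = 0 := Fin.ext (by omega)
    have hat : a = t := by rw [htdef]; exact (Equiv.eq_symm_apply π).mpr hpa0
    exact Finset.disjoint_left.mp hdisj (hat ▸ ha) ht
  · -- Aj.card ≥ 3
    have := (hd t ht).1
    rw [Finset.card_erase_of_mem ht] at this
    omega

/-- With `4` items and two agents having the same strict linear order, no
allocation of all `4` items is SD-EFX. -/
theorem no_sdefx_four_items {M : Type*} [Fintype M] [DecidableEq M]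
    (hM : Fintype.card M = 4) (π₁ π₂ : M ≃ Fin 4) (hππ : π₁ = π₂) :
    ¬ ∃ A : Fin 2 → Finset M, IsAllocation A Finset.univ ∧ SDEFX ![π₁, π₂] A := by
  subst hππ
  rintro ⟨A, ⟨hdisj, hcover⟩, hEFX⟩
  have hπ : ∀ i : Fin 2, ![π₁, π₁] i = π₁ := by
    intro i; fin_cases i <;> rfl
  have hunion : A 0 ∪ A 1 = Finset.univ := by
    rw [← hcover]; ext x
    simp [Fin.exists_fin_two]
  have hsum : (A 0).card + (A 1).card = 4 := by
    rw [← Finset.card_union_of_disjoint (hdisj 0 1 (by decide)), hunion,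
      Finset.card_univ, hM]
  have ht : π₁.symm 0 ∈ A 0 ∪ A 1 := by rw [hunion]; exact Finset.mem_univ _
  have hEFX' : ∀ i j : Fin 2, ∀ g ∈ A j, sdDom π₁ (A i) ((A j).erase g) := by
    intro i j g hg
    have := hEFX i j ⟨g, hg⟩ g hg
    rwa [hπ i] at this
  rcases Finset.mem_union.mp ht with h | h
  · exact core π₁ (A 1) (A 0) (hdisj 1 0 (by decide)) (by omega) h
      (hEFX' 1 0) (hEFX' 0 1)
  · exact core π₁ (A 0) (A 1) (hdisj 0 1 (by decide)) hsum h
      (hEFX' 0 1) (hEFX' 1 0)
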